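/- Fix t ∈ ℝ and r > 0. On the open set Ω = { v = (v₁,v₂) ∈ ℝ² : v₁ < 0, v₂ ≠ 0, v₁² + v₂² > v₂²·r² }, define t_{1,0}(v) := t − ( v₁·r + 2·√(v₁² + v₂² − v₂²·r²) )/(v₁² + v₂²). Then t_{1,0} is differentiable on Ω and for all v ∈ Ω: sgn(v₂)·|v₂|·(∂t_{1,0}/∂v₂)(v) − |v₁|·(∂t_{1,0}/∂v₁)(v) = t − t_{1,0}(v). -/

import Mathlib

/-- The turning time `t_{1,0}` of the backward free-transport characteristic through
radius `r` at time `t` with velocity `v` (after one specular reflection). -/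
noncomputable def turningTime (t r : ℝ) (v : ℝ × ℝ) : ℝ :=
  t - (v.1 * r + 2 * Real.sqrt (v.1 ^ 2 + v.2 ^ 2 - v.2 ^ 2 * r ^ 2)) /
    (v.1 ^ 2 + v.2 ^ 2)

/-- The partial-derivative identity (6-10):
`sgn(v₂)·|v₂|·∂t_{1,0}/∂v₂ − |v₁|·∂t_{1,0}/∂v₁ = t − t_{1,0}(v)` on the open set Ω. -/
theorem turningTime_derivative_identity (t r : ℝ) (hr : 0 < r) :
    ∀ v ∈ {w : ℝ × ℝ | w.1 < 0 ∧ w.2 ≠ 0 ∧ w.2 ^ 2 * r ^ 2 < w.1 ^ 2 + w.2 ^ 2},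
      DifferentiableAt ℝ (turningTime t r) v ∧
      Real.sign v.2 * |v.2| * fderiv ℝ (turningTime t r) v ((0 : ℝ), (1 : ℝ)) -
          |v.1| * fderiv ℝ (turningTime t r) v ((1 : ℝ), (0 : ℝ)) =
        t - turningTime t r v := by
  rintro ⟨a, b⟩ ⟨ha, hb, hΩ⟩
  simp only at ha hb hΩ
  have hS : 0 < a ^ 2 + b ^ 2 - b ^ 2 * r ^ 2 := by linarith
  have ha2 : 0 < a ^ 2 := by nlinarith
  have hN : 0 < a ^ 2 + b ^ 2 := by nlinarith [sq_nonneg b]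
  set s : ℝ := Real.sqrt (a ^ 2 + b ^ 2 - b ^ 2 * r ^ 2) with hsdef
  have hs : 0 < s := Real.sqrt_pos.mpr hS
  have hs2 : s ^ 2 = a ^ 2 + b ^ 2 - b ^ 2 * r ^ 2 := Real.sq_sqrt hS.le
  -- differentiability
  have hSd : DifferentiableAt ℝ (fun w : ℝ × ℝ => w.1 ^ 2 + w.2 ^ 2 - w.2 ^ 2 * r ^ 2)
      ((a, b) : ℝ × ℝ) := by fun_prop
  have hsq : DifferentiableAt ℝ
      (fun w : ℝ × ℝ => Real.sqrt (w.1 ^ 2 + w.2 ^ 2 - w.2 ^ 2 * r ^ 2)) ((a, b) : ℝ × ℝ) :=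
    hSd.sqrt hS.ne'
  have hDen : DifferentiableAt ℝ (fun w : ℝ × ℝ => w.1 ^ 2 + w.2 ^ 2) ((a, b) : ℝ × ℝ) := by
    fun_prop
  have hd : DifferentiableAt ℝ (turningTime t r) ((a, b) : ℝ × ℝ) := by
    unfold turningTime
    simp only [div_eq_mul_inv]
    exact (differentiableAt_const t).sub
      (((differentiableAt_fst.mul_const r).add (hsq.const_mul 2)).mul (hDen.inv hN.ne'))
  refine ⟨hd, ?_⟩
  -- 1D derivative in the first variable
  have hP1 : HasDerivAt (fun x : ℝ => x ^ 2 + b ^ 2 - b ^ 2 * r ^ 2) (2 * a) a := by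
    simpa using ((hasDerivAt_pow 2 a).add_const (b ^ 2)).sub_const (b ^ 2 * r ^ 2)
  have hsqrt1 : HasDerivAt (fun x : ℝ => Real.sqrt (x ^ 2 + b ^ 2 - b ^ 2 * r ^ 2))
      (2 * a / (2 * s)) a := hP1.sqrt hS.ne'
  have hnum1 : HasDerivAt (fun x : ℝ => x * r + 2 * Real.sqrt (x ^ 2 + b ^ 2 - b ^ 2 * r ^ 2))
      (r + 2 * (2 * a / (2 * s))) a := by
    simpa [Pi.add_def] using ((hasDerivAt_id a).mul_const r).add (hsqrt1.const_mul 2)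
  have hden1 : HasDerivAt (fun x : ℝ => x ^ 2 + b ^ 2) (2 * a) a := by
    simpa using (hasDerivAt_pow 2 a).add_const (b ^ 2)
  have hg1 : HasDerivAt (fun x : ℝ => turningTime t r (x, b))
      (-(((r + 2 * (2 * a / (2 * s))) * (a ^ 2 + b ^ 2) -
        (a * r + 2 * s) * (2 * a)) / (a ^ 2 + b ^ 2) ^ 2)) a := by
    have := (hasDerivAt_const a t).sub (hnum1.div hden1 hN.ne')
    simpa [turningTime, Pi.sub_def, Pi.div_def] using this
  -- 1D derivative in the second variable
  have hP2 : HasDerivAt (fun y : ℝ => a ^ 2 + y ^ 2 - y ^ 2 * r ^ 2)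
      (2 * b - 2 * b * r ^ 2) b := by
    have := (((hasDerivAt_pow 2 b).const_add (a ^ 2)).sub ((hasDerivAt_pow 2 b).mul_const (r ^ 2)))
    simpa [mul_comm, mul_assoc, Pi.sub_def] using this
  have hsqrt2 : HasDerivAt (fun y : ℝ => Real.sqrt (a ^ 2 + y ^ 2 - y ^ 2 * r ^ 2))
      ((2 * b - 2 * b * r ^ 2) / (2 * s)) b := hP2.sqrt hS.ne'
  have hnum2 : HasDerivAt (fun y : ℝ => a * r + 2 * Real.sqrt (a ^ 2 + y ^ 2 - y ^ 2 * r ^ 2))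
      (2 * ((2 * b - 2 * b * r ^ 2) / (2 * s))) b := by
    simpa using (hsqrt2.const_mul 2).const_add (a * r)
  have hden2 : HasDerivAt (fun y : ℝ => a ^ 2 + y ^ 2) (2 * b) b := by
    simpa using (hasDerivAt_pow 2 b).const_add (a ^ 2)
  have hg2 : HasDerivAt (fun y : ℝ => turningTime t r (a, y))
      (-((2 * ((2 * b - 2 * b * r ^ 2) / (2 * s)) * (a ^ 2 + b ^ 2) -
        (a * r + 2 * s) * (2 * b)) / (a ^ 2 + b ^ 2) ^ 2)) b := by
    have := (hasDerivAt_const b t).sub (hnum2.div hden2 hN.ne')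
    simpa [turningTime, Pi.sub_def, Pi.div_def] using this
  -- identify the directional derivatives
  have hline1 : HasDerivAt (fun x : ℝ => ((x, b) : ℝ × ℝ)) ((1 : ℝ), (0 : ℝ)) a :=
    (hasDerivAt_id a).prodMk (hasDerivAt_const a b)
  have hline2 : HasDerivAt (fun y : ℝ => ((a, y) : ℝ × ℝ)) ((0 : ℝ), (1 : ℝ)) b :=
    (hasDerivAt_const b a).prodMk (hasDerivAt_id b)
  have hcomp1 : HasDerivAt (fun x : ℝ => turningTime t r (x, b))
      (fderiv ℝ (turningTime t r) ((a, b) : ℝ × ℝ) ((1 : ℝ), (0 : ℝ))) a :=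
    by have := hd.hasFDerivAt.comp_hasDerivAt a hline1; exact this
  have hcomp2 : HasDerivAt (fun y : ℝ => turningTime t r (a, y))
      (fderiv ℝ (turningTime t r) ((a, b) : ℝ × ℝ) ((0 : ℝ), (1 : ℝ))) b :=
    hd.hasFDerivAt.comp_hasDerivAt b hline2
  have e1 := hcomp1.unique hg1
  have e2 := hcomp2.unique hg2
  have hsgn : Real.sign b * |b| = b := by
    rcases lt_or_gt_of_ne hb with h | h
    · rw [Real.sign_of_neg h, abs_of_neg h]; ring
    · rw [Real.sign_of_pos h, abs_of_pos h]; ring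
  simp only at e1 e2 ⊢
  rw [e1, e2, hsgn, abs_of_neg ha]
  unfold turningTime
  simp only [← hsdef]
  have hsne : s ≠ 0 := hs.ne'
  have hNne : (a ^ 2 + b ^ 2) ≠ 0 := hN.ne'
  field_simp
  ring_nf
  nlinarith [hs2, sq_nonneg s]
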